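/- arXiv:2404.01153 — 2 statements merged into one kernel-verified Lean document; each statement's English description precedes it below -/
import Mathlib

section
/- Let X ∈ ℝ^{n×p} have independent mean-zero sub-Gaussian rows with covariance Σ whose eigenvalues lie in [1/c, c], and let Σ̂ = X⊤X/n. Then there is a universal constant c1 > 0 such that P( max_{1≤j≤p} (Σ⁻¹)_j Σ̂ (Σ⁻¹)_j⊤ > 2 max_{1≤j≤p} (Σ⁻¹)_{jj} ) ≤ 2 p e^{−c1 n}, where (Σ⁻¹)_j denotes the j-th row of Σ⁻¹. -/
open MeasureTheory ProbabilityTheory Finset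

noncomputable section

/-- The ℓ₁ norm of a vector in `ℝ^p`. -/
def l1 {p : ℕ} (v : Fin p → ℝ) : ℝ := ∑ j, |v j|

/-- The squared ℓ₂ norm of a vector in `ℝ^p`. -/
def l2sq {p : ℕ} (v : Fin p → ℝ) : ℝ := ∑ j, (v j) ^ 2

/-- The ℓ∞ norm of a vector in `ℝ^p`. -/
def linf {p : ℕ} (v : Fin p → ℝ) : ℝ := ⨆ j, |v j|

open Classical in
/-- The ℓ₀ "norm" (number of nonzero coordinates, i.e. the sparsity level). -/
def l0 {p : ℕ} (v : Fin p → ℝ) : ℕ := (Finset.univ.filter fun j => v j ≠ 0).card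

/-- Euclidean inner product. -/
def dot {n : ℕ} (a b : Fin n → ℝ) : ℝ := ∑ i, a i * b i

/-- Quadratic form `v ↦ vᵀ S v`. -/
def quadForm {p : ℕ} (S : Fin p → Fin p → ℝ) (v : Fin p → ℝ) : ℝ :=
  ∑ j, ∑ l, v j * S j l * v l

/-- The sample covariance matrix `XᵀX / n` of a design matrix. -/
def sigHat {n p : ℕ} (X : Fin n → Fin p → ℝ) : Fin p → Fin p → ℝ :=
  fun j l => (1 / (n : ℝ)) * ∑ i, X i j * X i l

/-- Total sample size `N = K n_S + n_T`. -/
def Nn (K nS nT : ℕ) : ℕ := K * nS + nT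

/-- The average model-shift magnitude `h̄ = (n_S/N) ∑_k h_k`. -/
def hbar (nS N : ℕ) {K : ℕ} (h : Fin K → ℝ) : ℝ := ((nS : ℝ) / (N : ℝ)) * ∑ k, h k

variable {Ω : Type} [MeasurableSpace Ω]

/-- Assumption 1 (sub-Gaussian design): the rows of the random design matrix `X` are
independent, mean-zero, have covariance `S`, and are sub-Gaussian (uniform sub-Gaussian
tail, with constant `c`, for all one-dimensional unit-direction marginals). -/
def SubGaussianDesign {n p : ℕ} (μ : Measure Ω) (X : Ω → Fin n → Fin p → ℝ)
    (S : Fin p → Fin p → ℝ) (c : ℝ) : Prop :=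
  (∀ i j, Measurable fun ω => X ω i j) ∧
  iIndepFun
    (fun i ω => X ω i) μ ∧
  (∀ i j, ∫ ω, X ω i j ∂μ = 0) ∧
  (∀ i j l, ∫ ω, X ω i j * X ω i l ∂μ = S j l) ∧
  (∀ i (v : Fin p → ℝ), l2sq v = 1 → ∀ t : ℝ, 0 ≤ t →
    (μ {ω | t ≤ |dot (X ω i) v|}).toReal ≤ 2 * Real.exp (-(t ^ 2) / c))

/-- The covariance matrix `S` is symmetric with all eigenvalues in `[1/c, c]`
(stated via two-sided bounds on its quadratic form). -/
def CovWellConditioned {p : ℕ} (S : Fin p → Fin p → ℝ) (c : ℝ) : Prop :=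
  (∀ j l, S j l = S l j) ∧
  ∀ v : Fin p → ℝ, (1 / c) * l2sq v ≤ quadForm S v ∧ quadForm S v ≤ c * l2sq v

/-- Assumption 2 (Gaussian random errors): the coordinates of the noise vector `ε` are
independent centered Gaussians with variances uniformly bounded by `σ2max`. -/
def GaussianNoiseVec {n : ℕ} (μ : Measure Ω) (ε : Ω → Fin n → ℝ) (σ2max : ℝ) : Prop :=
  ∃ σ2 : Fin n → NNReal, (∀ i, (σ2 i : ℝ) ≤ σ2max) ∧
    (∀ i, Measurable fun ω => ε ω i) ∧
    iIndepFun (fun i ω => ε ω i) μ ∧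
    ∀ i, Measure.map (fun ω => ε ω i) μ = gaussianReal 0 (σ2 i)

/-- The transfer-learning model: one target task (design `X0`, noise `ε0`, parameter `β0`,
`n_T` samples) and `K` source tasks (designs `X k`, noises `ε k`, parameters `β k`,
`n_S` samples each), with population covariances `Sig0` and `Sig k`. -/
structure Model (Ω : Type) [MeasurableSpace Ω] (p K nS nT : ℕ) where
  μ : Measure Ω
  X0 : Ω → Fin nT → Fin p → ℝ
  X : Fin K → Ω → Fin nS → Fin p → ℝ
  ε0 : Ω → Fin nT → ℝ
  ε : Fin K → Ω → Fin nS → ℝ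
  β0 : Fin p → ℝ
  β : Fin K → Fin p → ℝ
  Sig0 : Fin p → Fin p → ℝ
  Sig : Fin K → Fin p → Fin p → ℝ

namespace Model

variable {p K nS nT : ℕ} (M : Model Ω p K nS nT)

/-- Target responses `y⁰ = X⁰β⁰ + ε⁰`. -/
def y0 (ω : Ω) : Fin nT → ℝ := fun i => dot (M.X0 ω i) M.β0 + M.ε0 ω i

/-- Source responses `y^(k) = X^(k)β^(k) + ε^(k)`. -/
def y (k : Fin K) (ω : Ω) : Fin nS → ℝ := fun i => dot (M.X k ω i) (M.β k) + M.ε k ω i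

/-- All noise coordinates (across all tasks) are jointly independent. -/
def AllNoiseIndep : Prop :=
  iIndepFun
    (fun i ω => Sum.elim (fun ki : Fin K × Fin nS => M.ε ki.1 ω ki.2)
      (fun i : Fin nT => M.ε0 ω i) i) M.μ

/-- The noises are independent of the designs. -/
def NoiseIndepDesign : Prop :=
  IndepFun (fun ω => (M.X0 ω, fun k => M.X k ω)) (fun ω => (M.ε0 ω, fun k => M.ε k ω)) M.μ

/-- Assumptions 1 and 2 of the paper, with sub-Gaussian/eigenvalue constant `c` and
noise-variance bound `σ2max`. -/
def Assumptions (c σ2max : ℝ) : Prop :=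
  IsProbabilityMeasure M.μ ∧
  SubGaussianDesign M.μ M.X0 M.Sig0 c ∧
  (∀ k, SubGaussianDesign M.μ (M.X k) (M.Sig k) c) ∧
  CovWellConditioned M.Sig0 c ∧
  (∀ k, CovWellConditioned (M.Sig k) c) ∧
  GaussianNoiseVec M.μ M.ε0 σ2max ∧
  (∀ k, GaussianNoiseVec M.μ (M.ε k) σ2max) ∧
  M.AllNoiseIndep ∧ M.NoiseIndepDesign

/-- The TransFusion step-1 (co-training) objective function (2) of the paper. -/
def obj (lam0 : ℝ) (a : Fin K → ℝ) (ω : Ω) (b0 : Fin p → ℝ) (b : Fin K → Fin p → ℝ) : ℝ :=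
  (1 / (2 * (Nn K nS nT : ℝ))) *
    ((∑ i, (M.y0 ω i - dot (M.X0 ω i) b0) ^ 2) +
      ∑ k, ∑ i, (M.y k ω i - dot (M.X k ω i) (b k)) ^ 2) +
  lam0 * (l1 b0 + ∑ k, a k * l1 fun j => b k j - b0 j)

/-- `(bhat0, bhat)` is a step-1 TransFusion estimator: it minimizes the step-1 objective. -/
def IsStep1Est (lam0 : ℝ) (a : Fin K → ℝ) (bhat0 : Ω → Fin p → ℝ)
    (bhat : Ω → Fin K → Fin p → ℝ) : Prop :=
  ∀ ω b0 b, M.obj lam0 a ω (bhat0 ω) (bhat ω) ≤ M.obj lam0 a ω b0 b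

/-- The population parameter average `w = (n_S/N) ∑_k β^(k) + (n_T/N) β⁰`. -/
def wBar : Fin p → ℝ :=
  fun j => ((nS : ℝ) / (Nn K nS nT : ℝ)) * ∑ k, M.β k j +
    ((nT : ℝ) / (Nn K nS nT : ℝ)) * M.β0 j

/-- The step-2 (local debias) objective function (3) of the paper, for a given first-step
estimator `what`. -/
def obj2 (what : Ω → Fin p → ℝ) (lamT : ℝ) (ω : Ω) (d : Fin p → ℝ) : ℝ :=
  (1 / (2 * (nT : ℝ))) *
    ∑ i, (M.y0 ω i - dot (M.X0 ω i) (what ω) - dot (M.X0 ω i) d) ^ 2 + lamT * l1 d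

/-- `dhat` is a step-2 TransFusion estimator. -/
def IsStep2Est (what : Ω → Fin p → ℝ) (lamT : ℝ) (dhat : Ω → Fin p → ℝ) : Prop :=
  ∀ ω d, M.obj2 what lamT ω (dhat ω) ≤ M.obj2 what lamT ω d

end Model

/-- The averaged estimator `ŵ = (n_S/N) ∑_k β̂^(k) + (n_T/N) β̂⁰`. -/
def wAvg (nS nT : ℕ) {Ω : Type} {p K : ℕ} (bhat0 : Ω → Fin p → ℝ)
    (bhat : Ω → Fin K → Fin p → ℝ) (ω : Ω) : Fin p → ℝ :=
  fun j => ((nS : ℝ) / (Nn K nS nT : ℝ)) * ∑ k, bhat ω k j +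
    ((nT : ℝ) / (Nn K nS nT : ℝ)) * bhat0 ω j

section InvCovAux
open Real Set

lemma icc_exp_taylor2 {x : ℝ} (hx : 0 ≤ x) : Real.exp x ≤ 1 + x + x^2 * Real.exp x := by
  rcases le_or_gt 1 x with h | h
  · have h2 : (1:ℝ) ≤ x^2 := by nlinarith
    nlinarith [Real.exp_pos x, mul_le_mul_of_nonneg_right h2 (Real.exp_pos x).le]
  · have h1 : 1 - x ≤ Real.exp (-x) := by
      have := Real.add_one_le_exp (-x); linarith
    have h2 : Real.exp (-x) * Real.exp x = 1 := by
      rw [← Real.exp_add]; simp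
    nlinarith [Real.exp_pos x, mul_nonneg hx (Real.exp_pos x).le]

lemma icc_le_exp_div {t x : ℝ} (ht : 0 < t) (hx : 0 ≤ x) : x ≤ Real.exp (t * x) / t := by
  rw [le_div_iff₀ ht]
  nlinarith [Real.add_one_le_exp (t * x), mul_nonneg hx ht.le]

variable {Ω : Type} [MeasurableSpace Ω] {μ : MeasureTheory.Measure Ω}
  [MeasureTheory.IsProbabilityMeasure μ]

open MeasureTheory in
lemma icc_mgf_crude {Z : Ω → ℝ} (hZ : Measurable Z) {c θ : ℝ} (hc : 1 ≤ c) (hθ : 0 < θ)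
    (hθc : θ * c ≤ 1/2)
    (tail : ∀ t : ℝ, 0 ≤ t → (μ {ω | t ≤ |Z ω|}).toReal ≤ 2 * Real.exp (-(t^2)/c)) :
    ∫⁻ ω, ENNReal.ofReal (Real.exp (θ * Z ω ^ 2)) ∂μ ≤ ENNReal.ofReal 5 := by
  have hc0 : 0 < c := lt_of_lt_of_le one_pos hc
  set f : Ω → ℝ := fun ω => Real.exp (θ * Z ω ^ 2) - 1 with hf
  have hfnn : ∀ ω, 0 ≤ f ω := fun ω => by
    have : (1:ℝ) ≤ Real.exp (θ * Z ω ^ 2) := Real.one_le_exp (by positivity)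
    simp only [hf]; linarith
  have hfm : Measurable f := ((hZ.pow_const 2).const_mul θ).exp.sub measurable_const
  have key : ∫⁻ ω, ENNReal.ofReal (f ω) ∂μ = ∫⁻ t in Ioi (0:ℝ), μ {ω | t < f ω} :=
    lintegral_eq_lintegral_meas_lt μ (Filter.Eventually.of_forall hfnn) hfm.aemeasurable
  have tails : ∀ t : ℝ, 0 < t → μ {ω | t < f ω} ≤ ENNReal.ofReal (2 * (1 + t^2)⁻¹) := by
    intro t ht
    set s : ℝ := Real.sqrt (Real.log (1+t) / θ) with hs
    have hlog : 0 ≤ Real.log (1+t) := Real.log_nonneg (by linarith)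
    have hs2 : s^2 = Real.log (1+t) / θ := Real.sq_sqrt (by positivity)
    have hsub : {ω | t < f ω} ⊆ {ω | s ≤ |Z ω|} := by
      intro ω hω
      simp only [Set.mem_setOf_eq] at hω ⊢
      have h1 : 1 + t < Real.exp (θ * Z ω ^ 2) := by
        simp only [hf] at hω; linarith
      have h2 : Real.log (1+t) < θ * Z ω ^ 2 := by
        have := Real.log_lt_log (by linarith) h1
        rwa [Real.log_exp] at this
      have h3 : s^2 ≤ |Z ω|^2 := by
        rw [hs2, sq_abs, div_le_iff₀ hθ]; linarith
      have := Real.sqrt_le_sqrt h3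
      rwa [Real.sqrt_sq (Real.sqrt_nonneg _), Real.sqrt_sq (abs_nonneg _)] at this
    have hb : (μ {ω | s ≤ |Z ω|}).toReal ≤ 2 * (1 + t^2)⁻¹ := by
      refine (tail s (Real.sqrt_nonneg _)).trans ?_
      have e1 : -(s^2)/c = -(Real.log (1+t) / (θ * c)) := by
        rw [hs2]; field_simp
      have e2 : Real.exp (-(s^2)/c) ≤ Real.exp (-(2 * Real.log (1+t))) := by
        apply Real.exp_le_exp.mpr
        rw [e1, neg_le_neg_iff]
        have h2c : 2 ≤ (θ * c)⁻¹ := by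
          rw [le_inv_comm₀] <;> nlinarith [mul_pos hθ hc0]
        calc 2 * Real.log (1+t) ≤ (θ*c)⁻¹ * Real.log (1+t) :=
              mul_le_mul_of_nonneg_right h2c hlog
          _ = Real.log (1+t) / (θ*c) := by ring
      have e3 : Real.exp (-(2 * Real.log (1+t))) = ((1+t)^2)⁻¹ := by
        rw [Real.exp_neg]
        congr 1
        rw [two_mul, Real.exp_add, Real.exp_log (by linarith)]
        ring
      have e4 : ((1+t)^2)⁻¹ ≤ (1 + t^2)⁻¹ := by
        apply inv_anti₀ (by positivity); nlinarith
      have := (e2.trans (e3.le.trans e4))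
      nlinarith [this]
    calc μ {ω | t < f ω} ≤ μ {ω | s ≤ |Z ω|} := measure_mono hsub
      _ = ENNReal.ofReal ((μ {ω | s ≤ |Z ω|}).toReal) :=
          (ENNReal.ofReal_toReal (measure_ne_top _ _)).symm
      _ ≤ ENNReal.ofReal (2 * (1 + t^2)⁻¹) := ENNReal.ofReal_le_ofReal hb
  have hInt : IntegrableOn (fun t : ℝ => 2 * (1 + t^2)⁻¹) (Ioi 0) :=
    (integrable_inv_one_add_sq.const_mul 2).integrableOn
  have step2 : ∫⁻ t in Ioi (0:ℝ), μ {ω | t < f ω} ≤ ENNReal.ofReal 4 := by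
    calc ∫⁻ t in Ioi (0:ℝ), μ {ω | t < f ω}
        ≤ ∫⁻ t in Ioi (0:ℝ), ENNReal.ofReal (2 * (1 + t^2)⁻¹) := by
          apply setLIntegral_mono (by fun_prop) (fun t ht => tails t ht)
      _ = ENNReal.ofReal (∫ t in Ioi (0:ℝ), 2 * (1 + t^2)⁻¹) :=
          (ofReal_integral_eq_lintegral_ofReal hInt
            (Filter.Eventually.of_forall fun t => by positivity)).symm
      _ ≤ ENNReal.ofReal 4 := by
          apply ENNReal.ofReal_le_ofReal
          rw [MeasureTheory.integral_const_mul, integral_Ioi_inv_one_add_sq]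
          simp only [Real.arctan_zero, sub_zero]
          nlinarith [Real.pi_le_four]
  have expand : ∫⁻ ω, ENNReal.ofReal (Real.exp (θ * Z ω ^ 2)) ∂μ
      = ∫⁻ ω, ENNReal.ofReal (f ω) ∂μ + 1 := by
    have : ∀ ω, ENNReal.ofReal (Real.exp (θ * Z ω ^ 2)) = ENNReal.ofReal (f ω) + 1 := by
      intro ω
      have : Real.exp (θ * Z ω ^ 2) = f ω + 1 := by simp [hf]
      rw [this, ENNReal.ofReal_add (hfnn ω) zero_le_one, ENNReal.ofReal_one]
    simp_rw [this]
    rw [lintegral_add_right _ measurable_const, lintegral_const, one_mul, measure_univ]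
  rw [expand, key]
  calc (∫⁻ t in Ioi (0:ℝ), μ {ω | t < f ω}) + 1 ≤ ENNReal.ofReal 4 + ENNReal.ofReal 1 := by
        rw [ENNReal.ofReal_one]; exact add_le_add step2 le_rfl
    _ = ENNReal.ofReal 5 := by rw [← ENNReal.ofReal_add] <;> norm_num

open MeasureTheory in
lemma icc_integrable_of_lint {f : Ω → ℝ} (hm : Measurable f) (hnn : ∀ ω, 0 ≤ f ω)
    (h : ∫⁻ ω, ENNReal.ofReal (f ω) ∂μ < ⊤) : Integrable f μ := by
  refine ⟨hm.aestronglyMeasurable, ?_⟩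
  rw [hasFiniteIntegral_iff_norm]
  simpa only [Real.norm_eq_abs, abs_of_nonneg (hnn _)] using h

open MeasureTheory in
lemma icc_mgf_refined {Z : Ω → ℝ} (hZ : Measurable Z) {c lam : ℝ} (hc : 1 ≤ c)
    (hlam : 0 < lam) (hlam2 : lam ≤ 1/(4*c))
    (tail : ∀ t : ℝ, 0 ≤ t → (μ {ω | t ≤ |Z ω|}).toReal ≤ 2 * Real.exp (-(t^2)/c)) :
    Integrable (fun ω => Z ω ^ 2) μ ∧
    ∫⁻ ω, ENNReal.ofReal (Real.exp (lam * Z ω ^ 2)) ∂μ ≤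
      ENNReal.ofReal (Real.exp (lam * (∫ ω, Z ω ^ 2 ∂μ) + 320 * lam^2 * c^2)) := by
  have hc0 : 0 < c := lt_of_lt_of_le one_pos hc
  have hθ0 : (0:ℝ) < 1/(2*c) := by positivity
  have hcr0 := icc_mgf_crude hZ hc hθ0 (by
    rw [div_mul_eq_mul_div, one_mul, div_le_div_iff₀ (by positivity) (by norm_num)]
    ring_nf; linarith [hc0]) tail
  have hExpInt0 : Integrable (fun ω => Real.exp ((1/(2*c)) * Z ω ^ 2)) μ :=
    icc_integrable_of_lint (by fun_prop) (fun ω => (Real.exp_pos _).le)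
      (lt_of_le_of_lt hcr0 ENNReal.ofReal_lt_top)
  have hZ2int : Integrable (fun ω => Z ω ^ 2) μ := by
    apply Integrable.mono' (hExpInt0.const_mul (2*c)) ((hZ.pow_const 2).aestronglyMeasurable)
    refine Filter.Eventually.of_forall fun ω => ?_
    rw [Real.norm_eq_abs, abs_of_nonneg (sq_nonneg _)]
    have := icc_le_exp_div hθ0 (sq_nonneg (Z ω))
    calc Z ω ^ 2 ≤ Real.exp ((1/(2*c)) * Z ω ^ 2) / (1/(2*c)) := this
      _ = 2*c * Real.exp ((1/(2*c)) * Z ω ^ 2) := by field_simp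
  refine ⟨hZ2int, ?_⟩
  set θ1 : ℝ := lam + 1/(4*c) with hθ1def
  have hθ1 : 0 < θ1 := by positivity
  have hθ1c : θ1 * c ≤ 1/2 := by
    have h1 : lam * c ≤ 1/4 := by
      calc lam * c ≤ (1/(4*c)) * c := mul_le_mul_of_nonneg_right hlam2 hc0.le
        _ = 1/4 := by field_simp
    have h2 : (1/(4*c)) * c = 1/4 := by field_simp
    calc θ1 * c = lam * c + (1/(4*c))*c := by ring
      _ ≤ 1/4 + 1/4 := by rw [h2]; linarith
      _ = 1/2 := by norm_num
  have hcr1 := icc_mgf_crude hZ hc hθ1 hθ1c tail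
  have ptwise : ∀ ω, Real.exp (lam * Z ω ^ 2) ≤
      (1 + lam * Z ω ^ 2) + (64 * c^2 * lam^2) * Real.exp (θ1 * Z ω ^ 2) := by
    intro ω
    set x : ℝ := Z ω ^ 2 with hx
    have hxnn : 0 ≤ x := sq_nonneg _
    have h1 : Real.exp (lam * x) ≤ 1 + lam * x + (lam*x)^2 * Real.exp (lam * x) :=
      icc_exp_taylor2 (by positivity)
    have h2 : x ≤ 8*c*Real.exp ((1/(8*c)) * x) := by
      have := icc_le_exp_div (t := 1/(8*c)) (by positivity) hxnn
      calc x ≤ Real.exp ((1/(8*c)) * x) / (1/(8*c)) := this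
        _ = 8*c*Real.exp ((1/(8*c)) * x) := by field_simp
    have h3 : x^2 ≤ 64*c^2 * Real.exp ((1/(4*c)) * x) := by
      have hsq := mul_self_le_mul_self hxnn h2
      have he : Real.exp ((1/(8*c)) * x) * Real.exp ((1/(8*c)) * x)
          = Real.exp ((1/(4*c)) * x) := by
        rw [← Real.exp_add]; congr 1; field_simp; ring
      calc x^2 = x * x := sq x
        _ ≤ (8*c*Real.exp ((1/(8*c)) * x)) * (8*c*Real.exp ((1/(8*c)) * x)) := hsq
        _ = 64*c^2 * (Real.exp ((1/(8*c)) * x) * Real.exp ((1/(8*c)) * x)) := by ring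
        _ = 64*c^2 * Real.exp ((1/(4*c)) * x) := by rw [he]
    have h4 : (lam*x)^2 * Real.exp (lam * x)
        ≤ (64 * c^2 * lam^2) * Real.exp (θ1 * x) := by
      have he2 : Real.exp ((1/(4*c)) * x) * Real.exp (lam * x) = Real.exp (θ1 * x) := by
        rw [← Real.exp_add]; congr 1; rw [hθ1def]; ring
      calc (lam*x)^2 * Real.exp (lam * x) = lam^2 * x^2 * Real.exp (lam * x) := by ring
        _ ≤ lam^2 * (64*c^2 * Real.exp ((1/(4*c)) * x)) * Real.exp (lam * x) := by
            apply mul_le_mul_of_nonneg_right _ (Real.exp_pos _).le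
            exact mul_le_mul_of_nonneg_left h3 (by positivity)
        _ = (64 * c^2 * lam^2) * (Real.exp ((1/(4*c)) * x) * Real.exp (lam * x)) := by ring
        _ = (64 * c^2 * lam^2) * Real.exp (θ1 * x) := by rw [he2]
    linarith
  have hint1 : Integrable (fun ω => 1 + lam * Z ω ^ 2) μ :=
    (integrable_const 1).add (hZ2int.const_mul lam)
  have hnn1 : ∀ ω, (0:ℝ) ≤ 1 + lam * Z ω ^ 2 := fun ω => by positivity
  calc ∫⁻ ω, ENNReal.ofReal (Real.exp (lam * Z ω ^ 2)) ∂μ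
      ≤ ∫⁻ ω, (ENNReal.ofReal (1 + lam * Z ω ^ 2)
          + ENNReal.ofReal ((64 * c^2 * lam^2) * Real.exp (θ1 * Z ω ^ 2))) ∂μ := by
        apply lintegral_mono fun ω => ?_
        calc ENNReal.ofReal (Real.exp (lam * Z ω ^ 2))
            ≤ ENNReal.ofReal ((1 + lam * Z ω ^ 2)
                + (64 * c^2 * lam^2) * Real.exp (θ1 * Z ω ^ 2)) :=
              ENNReal.ofReal_le_ofReal (ptwise ω)
          _ ≤ _ := ENNReal.ofReal_add_le
    _ = (∫⁻ ω, ENNReal.ofReal (1 + lam * Z ω ^ 2) ∂μ)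
        + ∫⁻ ω, ENNReal.ofReal ((64 * c^2 * lam^2) * Real.exp (θ1 * Z ω ^ 2)) ∂μ := by
        apply lintegral_add_left (by fun_prop)
    _ ≤ ENNReal.ofReal (1 + lam * ∫ ω, Z ω ^ 2 ∂μ) + ENNReal.ofReal (320 * lam^2 * c^2) := by
        apply add_le_add
        · rw [← ofReal_integral_eq_lintegral_ofReal hint1 (Filter.Eventually.of_forall hnn1)]
          apply ENNReal.ofReal_le_ofReal
          rw [integral_add (integrable_const 1) (hZ2int.const_mul lam), integral_const,
            MeasureTheory.integral_const_mul]
          simp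
        · calc ∫⁻ ω, ENNReal.ofReal ((64 * c^2 * lam^2) * Real.exp (θ1 * Z ω ^ 2)) ∂μ
              = ENNReal.ofReal (64 * c^2 * lam^2)
                  * ∫⁻ ω, ENNReal.ofReal (Real.exp (θ1 * Z ω ^ 2)) ∂μ := by
                simp_rw [ENNReal.ofReal_mul (by positivity : (0:ℝ) ≤ 64 * c^2 * lam^2)]
                rw [lintegral_const_mul _ (by fun_prop)]
            _ ≤ ENNReal.ofReal (64 * c^2 * lam^2) * ENNReal.ofReal 5 :=
                mul_le_mul_right hcr1 _
            _ = ENNReal.ofReal (320 * lam^2 * c^2) := by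
                rw [← ENNReal.ofReal_mul (by positivity)]; ring_nf
    _ ≤ ENNReal.ofReal (Real.exp (lam * (∫ ω, Z ω ^ 2 ∂μ) + 320 * lam^2 * c^2)) := by
        have h5' : 0 ≤ ∫ ω, Z ω ^ 2 ∂μ := integral_nonneg (fun ω => sq_nonneg (Z ω))
        rw [← ENNReal.ofReal_add (by positivity) (by positivity)]
        apply ENNReal.ofReal_le_ofReal
        have := Real.add_one_le_exp (lam * (∫ ω, Z ω ^ 2 ∂μ) + 320 * lam^2 * c^2)
        linarith

end InvCovAux

section InvCovAux2
open MeasureTheory ProbabilityTheory Finset Set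

lemma icc_lint_prod_indep {Ω : Type} [MeasurableSpace Ω] {μ : Measure Ω}
    [IsProbabilityMeasure μ] {n : ℕ} {g : Fin n → Ω → ENNReal} (hg : ∀ i, Measurable (g i))
    (hind : iIndepFun g μ)
    (s : Finset (Fin n)) :
    ∫⁻ ω, ∏ i ∈ s, g i ω ∂μ = ∏ i ∈ s, ∫⁻ ω, g i ω ∂μ := by
  classical
  induction s using Finset.induction with
  | empty => simp
  | @insert j s hj ih =>
    have hIndep : IndepFun (∏ i ∈ s, g i) (g j) μ :=
      iIndepFun.indepFun_finset_prod_of_notMem hind hg hj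
    have hpm : Measurable (∏ i ∈ s, g i) := by
      rw [Finset.prod_fn]; exact Finset.measurable_prod s (fun i _ => hg i)
    have hmul : ∫⁻ ω, (∏ i ∈ s, g i) ω * g j ω ∂μ
        = (∫⁻ ω, (∏ i ∈ s, g i) ω ∂μ) * ∫⁻ ω, g j ω ∂μ :=
      lintegral_mul_eq_lintegral_mul_lintegral_of_indepFun''
        hpm.aemeasurable (hg j).aemeasurable hIndep
    simp only [Finset.prod_apply] at hmul
    simp only [Finset.prod_insert hj]
    calc ∫⁻ ω, g j ω * ∏ i ∈ s, g i ω ∂μ = ∫⁻ ω, (∏ i ∈ s, g i ω) * g j ω ∂μ := by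
          simp_rw [mul_comm]
      _ = (∫⁻ ω, ∏ i ∈ s, g i ω ∂μ) * ∫⁻ ω, g j ω ∂μ := hmul
      _ = (∫⁻ ω, g j ω ∂μ) * ∫⁻ ω, ∏ i ∈ s, g i ω ∂μ := mul_comm _ _
      _ = (∫⁻ ω, g j ω ∂μ) * ∏ i ∈ s, ∫⁻ ω, g i ω ∂μ := by rw [ih]

lemma icc_ofReal_finset_prod {ι : Type*} (s : Finset ι) (f : ι → ℝ) (hf : ∀ i, 0 ≤ f i) :
    ENNReal.ofReal (∏ i ∈ s, f i) = ∏ i ∈ s, ENNReal.ofReal (f i) := by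
  classical
  induction s using Finset.induction with
  | empty => simp
  | @insert j s hj ih =>
    rw [Finset.prod_insert hj, Finset.prod_insert hj, ENNReal.ofReal_mul (hf j), ih]

lemma icc_triple_swap {n p : ℕ} (f : Fin p → Fin p → Fin n → ℝ) :
    ∑ j, ∑ l, ∑ i, f j l i = ∑ i, ∑ j, ∑ l, f j l i := by
  have h1 : ∀ j, ∑ l, ∑ i, f j l i = ∑ i, ∑ l, f j l i := fun j => Finset.sum_comm
  simp_rw [h1]
  exact Finset.sum_comm

lemma icc_dot_sq_expand {p : ℕ} (x v : Fin p → ℝ) :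
    (dot x v)^2 = ∑ j, ∑ l, (x j * v j) * (x l * v l) := by
  rw [sq]; unfold dot; rw [Finset.sum_mul_sum]

lemma icc_quadForm_sigHat {n p : ℕ} (Y : Fin n → Fin p → ℝ) (v : Fin p → ℝ) :
    quadForm (sigHat Y) v = (1 / (n:ℝ)) * ∑ i, (dot (Y i) v)^2 := by
  calc quadForm (sigHat Y) v
      = ∑ j, ∑ l, ∑ i, (1/(n:ℝ)) * ((v j * Y i j) * (v l * Y i l)) := by
        unfold quadForm sigHat
        refine Finset.sum_congr rfl fun j _ => Finset.sum_congr rfl fun l _ => ?_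
        rw [show v j * (1/(n:ℝ) * ∑ i, Y i j * Y i l) * v l
            = (∑ i, Y i j * Y i l) * (1/(n:ℝ) * v j * v l) by ring, Finset.sum_mul]
        exact Finset.sum_congr rfl fun i _ => by ring
    _ = ∑ i, ∑ j, ∑ l, (1/(n:ℝ)) * ((v j * Y i j) * (v l * Y i l)) := icc_triple_swap _
    _ = (1/(n:ℝ)) * ∑ i, (dot (Y i) v)^2 := by
        rw [Finset.mul_sum]
        refine Finset.sum_congr rfl fun i _ => ?_
        rw [icc_dot_sq_expand, Finset.mul_sum]
        refine Finset.sum_congr rfl fun j _ => ?_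
        rw [Finset.mul_sum]
        exact Finset.sum_congr rfl fun l _ => by ring

lemma icc_dot_smul_right {n : ℕ} (x v : Fin n → ℝ) (r : ℝ) :
    dot x (fun a => r * v a) = r * dot x v := by
  unfold dot; rw [Finset.mul_sum]; exact Finset.sum_congr rfl fun a _ => by ring

lemma icc_quadForm_smul {p : ℕ} (S : Fin p → Fin p → ℝ) (v : Fin p → ℝ) (r : ℝ) :
    quadForm S (fun a => r * v a) = r^2 * quadForm S v := by
  unfold quadForm
  rw [Finset.mul_sum]
  refine Finset.sum_congr rfl fun j _ => ?_
  rw [Finset.mul_sum]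
  exact Finset.sum_congr rfl fun l _ => by ring

lemma icc_quadForm_inv_diag {p : ℕ} (Sig : Matrix (Fin p) (Fin p) ℝ)
    (hdet : IsUnit Sig.det) (j : Fin p) :
    quadForm (fun a b => Sig a b) (fun a => Sig⁻¹ j a) = Sig⁻¹ j j := by
  have hinv : Sig⁻¹ * Sig = 1 := Matrix.nonsing_inv_mul Sig hdet
  unfold quadForm
  rw [Finset.sum_comm]
  have h1 : ∀ b, (∑ a, Sig⁻¹ j a * Sig a b * Sig⁻¹ j b)
      = (1 : Matrix (Fin p) (Fin p) ℝ) j b * Sig⁻¹ j b := by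
    intro b
    rw [← hinv, Matrix.mul_apply, Finset.sum_mul]
  simp_rw [h1, Matrix.one_apply]
  simp

lemma icc_row_inv_one {p : ℕ} (Sig : Matrix (Fin p) (Fin p) ℝ)
    (hdet : IsUnit Sig.det) (j : Fin p) :
    ∑ a, Sig⁻¹ j a * Sig a j = 1 := by
  have hinv : Sig⁻¹ * Sig = 1 := Matrix.nonsing_inv_mul Sig hdet
  have := congrFun (congrFun hinv j) j
  rw [Matrix.mul_apply] at this
  rw [this, Matrix.one_apply_eq]

lemma icc_l2sq_pos {p : ℕ} {v : Fin p → ℝ} (hv : v ≠ 0) : 0 < l2sq v := by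
  obtain ⟨a, ha⟩ : ∃ a, v a ≠ 0 := Function.ne_iff.mp hv
  have h1 : (v a)^2 ≤ l2sq v :=
    Finset.single_le_sum (fun i _ => sq_nonneg (v i)) (Finset.mem_univ a)
  have := pow_pos (abs_pos.mpr ha) 2
  rw [← sq_abs] at h1
  linarith

lemma icc_l2sq_nonneg {p : ℕ} (v : Fin p → ℝ) : 0 ≤ l2sq v :=
  Finset.sum_nonneg fun i _ => sq_nonneg (v i)

lemma icc_covWC_det_isUnit {p : ℕ} (Sig : Matrix (Fin p) (Fin p) ℝ) {c : ℝ} (hc : 0 < c)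
    (hCov : CovWellConditioned (fun j l => Sig j l) c) : IsUnit Sig.det := by
  have hPD : Sig.PosDef := by
    rw [Matrix.posDef_iff_dotProduct_mulVec]
    constructor
    · ext a b
      simpa using (hCov.1 b a)
    · intro x hx
      have h1 : (1/c) * l2sq x ≤ quadForm (fun j l => Sig j l) x := (hCov.2 x).1
      have h2 : 0 < l2sq x := icc_l2sq_pos hx
      have h3 : dotProduct (star x) (Sig.mulVec x)
          = quadForm (fun j l => Sig j l) x := by
        unfold quadForm dotProduct Matrix.mulVec
        simp only [star_trivial]
        refine Finset.sum_congr rfl fun j _ => ?_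
        unfold dotProduct
        rw [Finset.mul_sum]
        exact Finset.sum_congr rfl fun l _ => by ring
      rw [h3]
      calc (0:ℝ) < (1/c) * l2sq x := by positivity
        _ ≤ _ := h1
  exact isUnit_iff_ne_zero.mpr hPD.det_pos.ne'

lemma icc_dot_single {p : ℕ} (x : Fin p → ℝ) (j : Fin p) : dot x (Pi.single j 1) = x j := by
  unfold dot
  simp [Pi.single_apply, mul_ite]

lemma icc_l2sq_single {p : ℕ} (j : Fin p) : l2sq (Pi.single j 1 : Fin p → ℝ) = 1 := by
  unfold l2sq
  simp [Pi.single_apply, apply_ite (fun t : ℝ => t^2)]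

variable {Ω : Type} [MeasurableSpace Ω] {μ : Measure Ω} [IsProbabilityMeasure μ]

lemma icc_integrable_mul_of_sq {Ya Yb : Ω → ℝ} (hma : Measurable Ya) (hmb : Measurable Yb)
    (ha : Integrable (fun ω => Ya ω ^ 2) μ) (hb : Integrable (fun ω => Yb ω ^ 2) μ) :
    Integrable (fun ω => Ya ω * Yb ω) μ := by
  apply Integrable.mono' (((ha.add hb)).const_mul (1/2)) (hma.mul hmb).aestronglyMeasurable
  refine Filter.Eventually.of_forall fun ω => ?_
  rw [Real.norm_eq_abs, Pi.mul_apply, abs_mul]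
  simp only [Pi.add_apply]
  nlinarith [sq_abs (Ya ω), sq_abs (Yb ω), sq_nonneg (|Ya ω| - |Yb ω|),
    abs_nonneg (Ya ω), abs_nonneg (Yb ω)]

lemma icc_integral_dot_sq {p : ℕ} {Y : Ω → Fin p → ℝ} (S : Fin p → Fin p → ℝ)
    (hcovY : ∀ j l, ∫ ω, Y ω j * Y ω l ∂μ = S j l)
    (hints : ∀ j l : Fin p, Integrable (fun ω => Y ω j * Y ω l) μ) (u : Fin p → ℝ) :
    ∫ ω, (dot (Y ω) u)^2 ∂μ = quadForm S u := by
  have expand : ∀ ω, (dot (Y ω) u)^2 = ∑ j, ∑ l, (u j * u l) * (Y ω j * Y ω l) := by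
    intro ω
    rw [icc_dot_sq_expand]
    exact Finset.sum_congr rfl fun j _ => Finset.sum_congr rfl fun l _ => by ring
  calc ∫ ω, (dot (Y ω) u)^2 ∂μ
      = ∫ ω, ∑ j, ∑ l, (u j * u l) * (Y ω j * Y ω l) ∂μ :=
        integral_congr_ae (Filter.Eventually.of_forall expand)
    _ = ∑ j, ∑ l, ∫ ω, (u j * u l) * (Y ω j * Y ω l) ∂μ := by
        rw [integral_finset_sum _ (fun j _ =>
          integrable_finset_sum _ (fun l _ => (hints j l).const_mul _))]
        exact Finset.sum_congr rfl fun j _ =>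
          integral_finset_sum _ (fun l _ => (hints j l).const_mul _)
    _ = quadForm S u := by
        unfold quadForm
        refine Finset.sum_congr rfl fun j _ => Finset.sum_congr rfl fun l _ => ?_
        rw [MeasureTheory.integral_const_mul, hcovY j l]; ring

end InvCovAux2

section InvCovAux3
open MeasureTheory ProbabilityTheory Finset Set

variable {Ω : Type} [MeasurableSpace Ω] {μ : Measure Ω} [IsProbabilityMeasure μ]

lemma icc_chernoff_direction {n p : ℕ} {X : Ω → Fin n → Fin p → ℝ}
    (hXm : ∀ i j, Measurable fun ω => X ω i j)
    (hind : iIndepFun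
      (fun i ω => X ω i) μ)
    {c : ℝ} (hc : 1 ≤ c) (u : Fin p → ℝ)
    (tail : ∀ i (t : ℝ), 0 ≤ t →
      (μ {ω | t ≤ |dot (X ω i) u|}).toReal ≤ 2 * Real.exp (-(t^2)/c))
    {σ2 : ℝ} (hσ2 : ∀ i, ∫ ω, (dot (X ω i) u)^2 ∂μ = σ2) (hσ2c : 1/c ≤ σ2) :
    μ {ω | 2 * n * σ2 < ∑ i, (dot (X ω i) u)^2}
      ≤ ENNReal.ofReal (Real.exp (-(1/(1280*c^4)) * n)) := by
  have hc0 : 0 < c := lt_of_lt_of_le one_pos hc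
  set lam : ℝ := 1/(640*c^3) with hlamdef
  have hlam : 0 < lam := by positivity
  have hlam2 : lam ≤ 1/(4*c) := by
    rw [hlamdef, div_le_div_iff₀ (by positivity) (by positivity)]
    nlinarith [hc, hc0, mul_le_mul_of_nonneg_left hc hc0.le,
      mul_le_mul_of_nonneg_left (mul_le_mul_of_nonneg_left hc hc0.le) hc0.le]
  have hZm : ∀ i, Measurable (fun ω => dot (X ω i) u) := by
    intro i
    unfold dot
    exact Finset.measurable_sum _ (fun j _ => (hXm i j).mul_const (u j))
  set G : Fin n → Ω → ENNReal :=
    fun i ω => ENNReal.ofReal (Real.exp (lam * (dot (X ω i) u)^2)) with hGdef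
  have hGm : ∀ i, Measurable (G i) := by
    intro i
    exact (((hZm i).pow_const 2).const_mul lam).exp.ennreal_ofReal
  have hgm : Measurable
      (fun x : Fin p → ℝ => ENNReal.ofReal (Real.exp (lam * (dot x u)^2))) := by
    have : Measurable (fun x : Fin p → ℝ => dot x u) := by
      unfold dot
      exact Finset.measurable_sum _ (fun j _ => (measurable_pi_apply j : Measurable fun x : Fin p → ℝ => x j).mul_const (u j))
    exact ((this.pow_const 2).const_mul lam).exp.ennreal_ofReal
  have hGind : iIndepFun G μ := by
    have := hind.comp
      (fun _ => fun x : Fin p → ℝ => ENNReal.ofReal (Real.exp (lam * (dot x u)^2)))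
      (fun _ => hgm)
    exact this
  have hmgf : ∀ i, ∫⁻ ω, G i ω ∂μ ≤
      ENNReal.ofReal (Real.exp (lam * σ2 + 320 * lam^2 * c^2)) := by
    intro i
    have h := (icc_mgf_refined (hZm i) hc hlam hlam2 (tail i)).2
    rwa [hσ2 i] at h
  set ε : ENNReal := ENNReal.ofReal (Real.exp (lam * (2 * n * σ2))) with hεdef
  have hεne0 : ε ≠ 0 := (ENNReal.ofReal_pos.mpr (Real.exp_pos _)).ne'
  have hεtop : ε ≠ ⊤ := ENNReal.ofReal_ne_top
  set F : Ω → ENNReal := fun ω => ∏ i, G i ω with hFdef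
  have hFm : Measurable F := Finset.measurable_prod _ (fun i _ => hGm i)
  have hsub : {ω | 2 * n * σ2 < ∑ i, (dot (X ω i) u)^2} ⊆ {ω | ε ≤ F ω} := by
    intro ω hω
    simp only [Set.mem_setOf_eq] at hω ⊢
    have h1 : Real.exp (lam * (2 * n * σ2)) ≤ Real.exp (lam * ∑ i, (dot (X ω i) u)^2) :=
      Real.exp_le_exp.mpr (mul_le_mul_of_nonneg_left hω.le hlam.le)
    have h2 : Real.exp (lam * ∑ i, (dot (X ω i) u)^2)
        = ∏ i, Real.exp (lam * (dot (X ω i) u)^2) := by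
      rw [Finset.mul_sum, Real.exp_sum]
    have h3 : F ω = ENNReal.ofReal (Real.exp (lam * ∑ i, (dot (X ω i) u)^2)) := by
      rw [h2, hFdef, icc_ofReal_finset_prod _ _ (fun i => (Real.exp_pos _).le)]
    rw [h3, hεdef]
    exact ENNReal.ofReal_le_ofReal h1
  have markov := mul_meas_ge_le_lintegral₀ (μ := μ) hFm.aemeasurable ε
  have hprod : ∫⁻ ω, F ω ∂μ = ∏ i, ∫⁻ ω, G i ω ∂μ :=
    icc_lint_prod_indep hGm hGind Finset.univ
  have hFb : ∫⁻ ω, F ω ∂μ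
      ≤ ENNReal.ofReal (Real.exp (n * (lam * σ2 + 320 * lam^2 * c^2))) := by
    rw [hprod]
    calc ∏ i, ∫⁻ ω, G i ω ∂μ
        ≤ ∏ _i : Fin n, ENNReal.ofReal (Real.exp (lam * σ2 + 320 * lam^2 * c^2)) :=
          Finset.prod_le_prod' (fun i _ => hmgf i)
      _ = ENNReal.ofReal (Real.exp (lam * σ2 + 320 * lam^2 * c^2)) ^ n := by
          rw [Finset.prod_const, Finset.card_univ, Fintype.card_fin]
      _ = ENNReal.ofReal (Real.exp (lam * σ2 + 320 * lam^2 * c^2) ^ n) := by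
          rw [ENNReal.ofReal_pow (Real.exp_pos _).le]
      _ = ENNReal.ofReal (Real.exp (n * (lam * σ2 + 320 * lam^2 * c^2))) := by
          rw [Real.exp_nat_mul]
  have key : μ {ω | ε ≤ F ω} ≤
      ENNReal.ofReal (Real.exp (n * (lam * σ2 + 320 * lam^2 * c^2))) / ε := by
    rw [ENNReal.le_div_iff_mul_le (Or.inl hεne0) (Or.inl hεtop), mul_comm]
    exact markov.trans hFb
  have hdiv : ENNReal.ofReal (Real.exp (n * (lam * σ2 + 320 * lam^2 * c^2))) / ε
      = ENNReal.ofReal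
          (Real.exp (n * (lam * σ2 + 320 * lam^2 * c^2) - lam * (2 * n * σ2))) := by
    rw [hεdef, ← ENNReal.ofReal_div_of_pos (Real.exp_pos _), ← Real.exp_sub]
  have hfinal : Real.exp (n * (lam * σ2 + 320 * lam^2 * c^2) - lam * (2 * n * σ2))
      ≤ Real.exp (-(1/(1280*c^4)) * n) := by
    apply Real.exp_le_exp.mpr
    have hkey : 1/(1280*c^4) ≤ lam * σ2 - 320 * lam^2 * c^2 := by
      have h1 : lam * (1/c) ≤ lam * σ2 := mul_le_mul_of_nonneg_left hσ2c hlam.le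
      have h2 : lam * (1/c) = 2 / (1280 * c^4) := by
        rw [hlamdef]; field_simp; ring
      have h3 : 320 * lam^2 * c^2 = 1 / (1280 * c^4) := by
        rw [hlamdef]; field_simp; ring
      rw [h3]; rw [h2] at h1
      have hpos : (0:ℝ) < 1280 * c^4 := by positivity
      have h4 : 1/(1280*c^4) + 1/(1280*c^4) = 2/(1280*c^4) := by ring
      linarith
    have hn : (0:ℝ) ≤ n := Nat.cast_nonneg n
    calc (n:ℝ) * (lam * σ2 + 320 * lam^2 * c^2) - lam * (2 * n * σ2)
        = -(n * (lam * σ2 - 320 * lam^2 * c^2)) := by ring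
      _ ≤ -(n * (1/(1280*c^4))) := by
          apply neg_le_neg
          exact mul_le_mul_of_nonneg_left hkey hn
      _ = -(1/(1280*c^4)) * n := by ring
  calc μ {ω | 2 * n * σ2 < ∑ i, (dot (X ω i) u)^2} ≤ μ {ω | ε ≤ F ω} := measure_mono hsub
    _ ≤ _ := key
    _ = _ := hdiv
    _ ≤ ENNReal.ofReal (Real.exp (-(1/(1280*c^4)) * n)) := ENNReal.ofReal_le_ofReal hfinal

end InvCovAux3

/-- Lemma 6, concentration of the sample covariance along the rows of
the inverse covariance: `P( max_j (Σ⁻¹)_j Σ̂ (Σ⁻¹)_jᵀ > 2 max_j (Σ⁻¹)_{jj} ) ≤ 2p e^{−c1 n}`. -/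
theorem inverse_covariance_concentration (c : ℝ) (hc : 0 < c) :
    ∃ c1 : ℝ, 0 < c1 ∧
      ∀ (Ω : Type) [MeasurableSpace Ω] (n p : ℕ) (μ : Measure Ω)
        (X : Ω → Fin n → Fin p → ℝ) (Sig : Matrix (Fin p) (Fin p) ℝ),
        IsProbabilityMeasure μ →
        SubGaussianDesign μ X (fun j l => Sig j l) c →
        CovWellConditioned (fun j l => Sig j l) c →
        μ {ω | 2 * (⨆ l, Sig⁻¹ l l) <
            ⨆ j, quadForm (sigHat (X ω)) fun a => Sig⁻¹ j a} ≤
          ENNReal.ofReal (2 * (p : ℝ) * Real.exp (-c1 * n)) := by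
  have hcc1 : (1:ℝ) ≤ max c 1 := le_max_right c 1
  have hccc : c ≤ max c 1 := le_max_left c 1
  have hcc0 : (0:ℝ) < max c 1 := lt_of_lt_of_le one_pos hcc1
  refine ⟨1/(1280*(max c 1)^4), by positivity, ?_⟩
  intro Ω _ n p μ X Sig hprob hSub hCov
  haveI := hprob
  set cc : ℝ := max c 1 with hccdef
  obtain ⟨hXm, hXind, _hXmean, hXcov, hXtail⟩ := hSub
  rcases Nat.eq_zero_or_pos p with hp | hp
  · subst hp
    have hE : {ω | 2 * (⨆ l, Sig⁻¹ l l) <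
        ⨆ j, quadForm (sigHat (X ω)) fun a => Sig⁻¹ j a} = (∅ : Set Ω) := by
      ext ω
      simp [Real.iSup_of_isEmpty]
    rw [hE]
    simp
  haveI hne : Nonempty (Fin p) := ⟨⟨0, hp⟩⟩
  have hp1 : (1:ℝ) ≤ (p:ℝ) := by exact_mod_cast hp
  rcases Nat.eq_zero_or_pos n with hn | hn
  · subst hn
    refine le_trans prob_le_one ?_
    rw [Nat.cast_zero, mul_zero, Real.exp_zero, mul_one]
    exact ENNReal.one_le_ofReal.mpr (by linarith)
  have hn' : (0:ℝ) < n := by exact_mod_cast hn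
  have hdet : IsUnit Sig.det := icc_covWC_det_isUnit Sig hc hCov
  obtain ⟨hSsymm, hSeig⟩ := hCov
  -- tails with respect to cc
  have htailcc : ∀ (i : Fin n) (v : Fin p → ℝ), l2sq v = 1 → ∀ t : ℝ, 0 ≤ t →
      (μ {ω | t ≤ |dot (X ω i) v|}).toReal ≤ 2 * Real.exp (-(t^2)/cc) := by
    intro i v hv t ht
    refine (hXtail i v hv t ht).trans ?_
    have hee : -(t^2)/c ≤ -(t^2)/cc := by
      rw [neg_div, neg_div, neg_le_neg_iff]
      exact div_le_div_of_nonneg_left (sq_nonneg t) hc hccc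
    nlinarith [Real.exp_le_exp.mpr hee]
  -- integrability of coordinate products
  have hcoord_int : ∀ (i : Fin n) (a : Fin p), Integrable (fun ω => (X ω i a)^2) μ := by
    intro i a
    have htail' : ∀ t : ℝ, 0 ≤ t →
        (μ {ω | t ≤ |X ω i a|}).toReal ≤ 2 * Real.exp (-(t^2)/cc) := by
      intro t ht
      have h := htailcc i (Pi.single a 1) (icc_l2sq_single a) t ht
      have hs : {ω | t ≤ |dot (X ω i) (Pi.single a 1)|} = {ω | t ≤ |X ω i a|} := by
        ext ω; rw [Set.mem_setOf_eq, Set.mem_setOf_eq, icc_dot_single]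
      rwa [hs] at h
    exact (icc_mgf_refined (hXm i a) hcc1 (by positivity : (0:ℝ) < 1/(4*cc)) le_rfl htail').1
  have hmul_int : ∀ (i : Fin n) (a b : Fin p),
      Integrable (fun ω => X ω i a * X ω i b) μ :=
    fun i a b => icc_integrable_mul_of_sq (hXm i a) (hXm i b) (hcoord_int i a) (hcoord_int i b)
  -- unit directions along the rows of the inverse covariance
  set u : Fin p → Fin p → ℝ :=
    fun j a => Sig⁻¹ j a / Real.sqrt (l2sq (fun b => Sig⁻¹ j b)) with hu
  have hvne : ∀ j : Fin p, (fun a => Sig⁻¹ j a) ≠ 0 := by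
    intro j h0
    have h1 := icc_row_inv_one Sig hdet j
    have h2 : ∀ a, Sig⁻¹ j a = 0 := fun a => congrFun h0 a
    simp [h2] at h1
  have hr : ∀ j : Fin p, 0 < Real.sqrt (l2sq (fun b => Sig⁻¹ j b)) :=
    fun j => Real.sqrt_pos.mpr (icc_l2sq_pos (hvne j))
  have huv : ∀ (j : Fin p) (a : Fin p),
      Sig⁻¹ j a = Real.sqrt (l2sq (fun b => Sig⁻¹ j b)) * u j a := by
    intro j a
    rw [hu]
    rw [mul_comm, div_mul_cancel₀ _ (hr j).ne']
  have hul2 : ∀ j : Fin p, l2sq (u j) = 1 := by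
    intro j
    have hl2 : l2sq (u j) = l2sq (fun b => Sig⁻¹ j b)
        / Real.sqrt (l2sq (fun b => Sig⁻¹ j b)) ^ 2 := by
      rw [hu]
      unfold l2sq
      simp_rw [div_pow]
      rw [← Finset.sum_div]
    rw [hl2, Real.sq_sqrt (icc_l2sq_nonneg _)]
    exact div_self (icc_l2sq_pos (hvne j)).ne'
  have hσ2eq : ∀ (j : Fin p) (i : Fin n),
      ∫ ω, (dot (X ω i) (u j))^2 ∂μ = quadForm (fun a b => Sig a b) (u j) :=
    fun j i => icc_integral_dot_sq (fun a b => Sig a b) (hXcov i) (hmul_int i) (u j)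
  have hσ2lb : ∀ j : Fin p, 1/cc ≤ quadForm (fun a b => Sig a b) (u j) := by
    intro j
    have h1 := (hSeig (u j)).1
    rw [hul2 j, mul_one] at h1
    have h2 : 1/cc ≤ 1/c := one_div_le_one_div_of_le hc hccc
    linarith
  set A : Fin p → Set Ω := fun j =>
    {ω | 2 * n * quadForm (fun a b => Sig a b) (u j) < ∑ i, (dot (X ω i) (u j))^2} with hA
  have hchern : ∀ j : Fin p, μ (A j) ≤
      ENNReal.ofReal (Real.exp (-(1/(1280*cc^4)) * n)) := by
    intro j
    exact icc_chernoff_direction hXm hXind hcc1 (u j)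
      (fun i t ht => htailcc i (u j) (hul2 j) t ht) (hσ2eq j) (hσ2lb j)
  have hsub : {ω | 2 * (⨆ l, Sig⁻¹ l l) <
      ⨆ j, quadForm (sigHat (X ω)) fun a => Sig⁻¹ j a} ⊆ ⋃ j, A j := by
    intro ω hω
    simp only [Set.mem_setOf_eq] at hω
    obtain ⟨j, hj⟩ : ∃ j, 2 * (⨆ l, Sig⁻¹ l l)
        < quadForm (sigHat (X ω)) fun a => Sig⁻¹ j a := by
      by_contra h
      push_neg at h
      exact absurd (ciSup_le h) (not_le.mpr hω)
    refine Set.mem_iUnion.mpr ⟨j, ?_⟩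
    simp only [hA, Set.mem_setOf_eq]
    set r : ℝ := Real.sqrt (l2sq (fun b => Sig⁻¹ j b)) with hrdef
    have hfne : (fun a => Sig⁻¹ j a) = fun a => r * u j a := funext (huv j)
    have h2 : quadForm (sigHat (X ω)) (fun a => Sig⁻¹ j a)
        = (1/(n:ℝ)) * ∑ i, (dot (X ω i) (fun a => Sig⁻¹ j a))^2 :=
      icc_quadForm_sigHat _ _
    have h3 : ∑ i, (dot (X ω i) (fun a => Sig⁻¹ j a))^2
        = r^2 * ∑ i, (dot (X ω i) (u j))^2 := by
      rw [Finset.mul_sum]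
      refine Finset.sum_congr rfl fun i _ => ?_
      rw [hfne, icc_dot_smul_right]; ring
    have h4 : Sig⁻¹ j j = r^2 * quadForm (fun a b => Sig a b) (u j) := by
      rw [← icc_quadForm_inv_diag Sig hdet j, hfne, icc_quadForm_smul]
    have h5 : Sig⁻¹ j j ≤ ⨆ l, Sig⁻¹ l l :=
      le_ciSup (Set.Finite.bddAbove (Set.finite_range fun l => Sig⁻¹ l l)) j
    have h6 : 2 * (⨆ l, Sig⁻¹ l l) < (1/(n:ℝ)) * (r^2 * ∑ i, (dot (X ω i) (u j))^2) := by
      rw [h2, h3] at hj; exact hj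
    have hr2 : (0:ℝ) < r^2 := pow_pos (hr j) 2
    have hfin : r^2 * (2 * n * quadForm (fun a b => Sig a b) (u j))
        < r^2 * ∑ i, (dot (X ω i) (u j))^2 := by
      have e1 : (n:ℝ) * ((1/(n:ℝ)) * (r^2 * ∑ i, (dot (X ω i) (u j))^2))
          = r^2 * ∑ i, (dot (X ω i) (u j))^2 := by
        field_simp
      calc r^2 * (2 * n * quadForm (fun a b => Sig a b) (u j))
          = (n:ℝ) * (2 * (r^2 * quadForm (fun a b => Sig a b) (u j))) := by ring
        _ ≤ (n:ℝ) * (2 * (⨆ l, Sig⁻¹ l l)) := by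
            apply mul_le_mul_of_nonneg_left _ hn'.le
            rw [← h4]; linarith
        _ < (n:ℝ) * ((1/(n:ℝ)) * (r^2 * ∑ i, (dot (X ω i) (u j))^2)) :=
            mul_lt_mul_of_pos_left h6 hn'
        _ = r^2 * ∑ i, (dot (X ω i) (u j))^2 := e1
    exact lt_of_mul_lt_mul_left hfin (sq_nonneg r)
  calc μ {ω | 2 * (⨆ l, Sig⁻¹ l l) <
        ⨆ j, quadForm (sigHat (X ω)) fun a => Sig⁻¹ j a}
      ≤ μ (⋃ j, A j) := measure_mono hsub
    _ ≤ ∑' j, μ (A j) := measure_iUnion_le A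
    _ ≤ ∑' _j : Fin p, ENNReal.ofReal (Real.exp (-(1/(1280*cc^4)) * n)) :=
        ENNReal.tsum_le_tsum hchern
    _ = ∑ _j : Fin p, ENNReal.ofReal (Real.exp (-(1/(1280*cc^4)) * n)) := tsum_fintype _
    _ = (p : ENNReal) * ENNReal.ofReal (Real.exp (-(1/(1280*cc^4)) * n)) := by
        rw [Finset.sum_const, Finset.card_univ, Fintype.card_fin, nsmul_eq_mul]
    _ ≤ ENNReal.ofReal (2 * (p:ℝ) * Real.exp (-(1/(1280*cc^4)) * n)) := by
        rw [← ENNReal.ofReal_natCast p, ← ENNReal.ofReal_mul (Nat.cast_nonneg p)]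
        apply ENNReal.ofReal_le_ofReal
        nlinarith [Real.exp_pos (-(1/(1280*cc^4)) * (n:ℝ)), hp1]

end
end

section
/- Let p ≥ 2, let A be the p × p arrowhead matrix with ones on the diagonal and in the first row and first column and zeros elsewhere, fix c ∈ (0, 1), set α = c/√(p − 1), and define Σ¹ = αA + (1 − α)I and Σ⁰ = I. Then: (i) Λ_min(Σ¹) = 1 − c and Λ_max(Σ¹) = 1 + c; and (ii) the covariate-shift factor C_Σ := 1 + max_{1≤j≤p} ‖e_j⊤ (Σ¹ − Σ⁰)(Σ¹)⁻¹‖₁ satisfies a1 √p ≤ C_Σ ≤ a2 √p for constants a1, a2 > 0 depending only on c; in particular C_Σ diverges with p. -/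
open Finset

noncomputable section
/-- The `p × p` arrowhead matrix with ones on the diagonal and in the first row and
first column, and zeros elsewhere. -/
def arrowhead (p : ℕ) : Matrix (Fin p) (Fin p) ℝ :=
  Matrix.of fun i j => if i = j ∨ i.val = 0 ∨ j.val = 0 then (1 : ℝ) else 0

/-- The source covariance `Σ¹ = αA + (1−α)I` with `α = c/√(p−1)`. -/
def shiftedCov (p : ℕ) (c : ℝ) : Matrix (Fin p) (Fin p) ℝ :=
  (c / Real.sqrt ((p : ℝ) - 1)) • arrowhead p +
    (1 - c / Real.sqrt ((p : ℝ) - 1)) • (1 : Matrix (Fin p) (Fin p) ℝ)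

/-- The covariate-shift factor `C_Σ = 1 + max_j ‖e_jᵀ(Σ¹ − Σ⁰)(Σ¹)⁻¹‖₁` for the single
source case with `Σ⁰ = I`. -/
def covShiftFactor (p : ℕ) (c : ℝ) : ℝ :=
  1 + ⨆ j : Fin p, ∑ l,
    |((shiftedCov p c - 1) * (shiftedCov p c)⁻¹) j l|

open Matrix in
lemma eig_lb {p : ℕ} {A : Matrix (Fin p) (Fin p) ℝ} (hA : A.IsHermitian) {t : ℝ}
    (h : ∀ x : Fin p → ℝ, t * (x ⬝ᵥ x) ≤ x ⬝ᵥ (A *ᵥ x)) (i : Fin p) :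
    t ≤ hA.eigenvalues i := by
  set v : Fin p → ℝ := ⇑(hA.eigenvectorBasis i) with hv
  have hv0 : v ≠ 0 := by
    have h2 := hA.eigenvectorBasis.orthonormal.ne_zero i
    intro hc
    apply h2
    ext j
    exact congrFun hc j
  have hAv : A *ᵥ v = hA.eigenvalues i • v := hA.mulVec_eigenvectorBasis i
  have hq := h v
  rw [hAv, dotProduct_smul] at hq
  have hvv : 0 < v ⬝ᵥ v := by
    have h1 : 0 ≤ v ⬝ᵥ v := Finset.sum_nonneg fun j _ => mul_self_nonneg _
    rcases h1.lt_or_eq with h2 | h2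
    · exact h2
    · exact absurd (dotProduct_self_eq_zero.mp h2.symm) hv0
  exact le_of_mul_le_mul_right (by simpa [smul_eq_mul] using hq) hvv

open Matrix in
lemma eig_ub {p : ℕ} {A : Matrix (Fin p) (Fin p) ℝ} (hA : A.IsHermitian) {t : ℝ}
    (h : ∀ x : Fin p → ℝ, x ⬝ᵥ (A *ᵥ x) ≤ t * (x ⬝ᵥ x)) (i : Fin p) :
    hA.eigenvalues i ≤ t := by
  set v : Fin p → ℝ := ⇑(hA.eigenvectorBasis i) with hv
  have hv0 : v ≠ 0 := by
    have h2 := hA.eigenvectorBasis.orthonormal.ne_zero i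
    intro hc
    apply h2
    ext j
    exact congrFun hc j
  have hAv : A *ᵥ v = hA.eigenvalues i • v := hA.mulVec_eigenvectorBasis i
  have hq := h v
  rw [hAv, dotProduct_smul] at hq
  have hvv : 0 < v ⬝ᵥ v := by
    have h1 : 0 ≤ v ⬝ᵥ v := Finset.sum_nonneg fun j _ => mul_self_nonneg _
    rcases h1.lt_or_eq with h2 | h2
    · exact h2
    · exact absurd (dotProduct_self_eq_zero.mp h2.symm) hv0
  exact le_of_mul_le_mul_right (by simpa [smul_eq_mul] using hq) hvv

open Matrix in
lemma eig_attained {p : ℕ} {A : Matrix (Fin p) (Fin p) ℝ} (hA : A.IsHermitian)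
    {μ : ℝ} {w : Fin p → ℝ} (hw : w ≠ 0) (h : A *ᵥ w = μ • w) :
    ∃ i, hA.eigenvalues i = μ := by
  by_contra hcon
  push_neg at hcon
  have hdet : (A - μ • 1).det = 0 := by
    rw [← Matrix.exists_mulVec_eq_zero_iff]
    refine ⟨w, hw, ?_⟩
    rw [Matrix.sub_mulVec, Matrix.smul_mulVec, Matrix.one_mulVec, h, sub_self]
  set U : Matrix (Fin p) (Fin p) ℝ := (hA.eigenvectorUnitary : Matrix (Fin p) (Fin p) ℝ) with hUdef
  have hU : U * star U = 1 := (Matrix.mem_unitaryGroup_iff).mp hA.eigenvectorUnitary.2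
  have hkey : A - μ • 1 = U * (Matrix.diagonal (fun i => hA.eigenvalues i - μ)) * star U := by
    have h1 : (Matrix.diagonal fun i => hA.eigenvalues i - μ)
        = Matrix.diagonal (RCLike.ofReal ∘ hA.eigenvalues) - μ • (1 : Matrix (Fin p) (Fin p) ℝ) := by
      rw [Matrix.smul_one_eq_diagonal, ← Matrix.diagonal_sub]
      simp [RCLike.ofReal_real_eq_id]
    rw [h1, Matrix.mul_sub, Matrix.sub_mul]
    rw [Matrix.mul_smul, Matrix.mul_one, Matrix.smul_mul, hU]
    congr 1
    exact hA.spectral_theorem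
  have hprod : (A - μ • 1).det = ∏ i, (hA.eigenvalues i - μ) := by
    rw [hkey, Matrix.det_mul, Matrix.det_mul, Matrix.det_diagonal]
    have h2 : U.det * (star U).det = 1 := by rw [← Matrix.det_mul, hU, Matrix.det_one]
    rw [mul_right_comm, h2, one_mul]
  rw [hdet] at hprod
  obtain ⟨i, _, hi⟩ := Finset.prod_eq_zero_iff.mp hprod.symm
  exact hcon i (by linarith [sub_eq_zero.mp hi])

open Matrix in
lemma main_aux (c : ℝ) (hc0 : 0 < c) (hc1 : c < 1) (p : ℕ) (hp : 2 ≤ p) :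
    ∃ hS : (shiftedCov p c).IsHermitian,
      (∀ i, 1 - c ≤ hS.eigenvalues i ∧ hS.eigenvalues i ≤ 1 + c) ∧
      (∃ i, hS.eigenvalues i = 1 - c) ∧
      (∃ i, hS.eigenvalues i = 1 + c) ∧
      covShiftFactor p c
        = 1 + (c * c + c * Real.sqrt ((p : ℝ) - 1)) / (1 - c * c) := by
  haveI : NeZero p := ⟨by omega⟩
  haveI : Nonempty (Fin p) := ⟨0⟩
  have hp2 : (2 : ℝ) ≤ (p : ℝ) := by exact_mod_cast hp
  set m : ℝ := (p : ℝ) - 1 with hm_def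
  have hm1 : 1 ≤ m := by rw [hm_def]; linarith
  have hm0 : 0 < m := by linarith
  set s : ℝ := Real.sqrt m with hs_def
  have hs0 : 0 < s := Real.sqrt_pos.mpr hm0
  have hs1 : 1 ≤ s := by
    have := Real.sqrt_le_sqrt hm1
    simpa [hs_def] using this
  have hss : s * s = m := Real.mul_self_sqrt hm0.le
  set α : ℝ := c / s with hα_def
  have hα0 : 0 < α := div_pos hc0 hs0
  have hαs : α * s = c := div_mul_cancel₀ c hs0.ne'
  have hαm : α * m = c * s := by rw [← hss, ← mul_assoc, hαs]
  have hααm : α * α * m = c * c := by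
    rw [← hss]
    calc α * α * (s * s) = (α * s) * (α * s) := by ring
    _ = c * c := by rw [hαs]
  have hαc : α ≤ c := by rw [hα_def]; exact div_le_self hc0.le hs1
  set d : ℝ := 1 - c * c with hd_def
  have hd0 : 0 < d := by nlinarith
  have hd1 : d ≤ 1 := by nlinarith
  -- entries of Σ
  have hSig : ∀ i j : Fin p, shiftedCov p c i j
      = if i = j then 1 else if i = 0 ∨ j = 0 then α else 0 := by
    intro i j
    have hv : (i.val = 0 ∨ j.val = 0) ↔ (i = 0 ∨ j = 0) := by
      rw [Fin.val_eq_zero_iff, Fin.val_eq_zero_iff]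
    simp only [shiftedCov, arrowhead, Matrix.add_apply, Matrix.smul_apply, Matrix.of_apply,
      Matrix.one_apply, smul_eq_mul]
    rw [show c / Real.sqrt ((p : ℝ) - 1) = α from by rw [hα_def, hs_def, hm_def]]
    by_cases hij : i = j
    · subst hij; simp
    · have hcond : (i = j ∨ i.val = 0 ∨ j.val = 0) ↔ (i = 0 ∨ j = 0) := by
        rw [or_iff_right hij]; exact hv
      rw [if_neg hij, if_neg hij, if_congr hcond rfl rfl]
      by_cases h0 : i = 0 ∨ j = 0 <;> simp [h0]
  -- summation helpers
  have hsplit : ∀ f : Fin p → ℝ, ∑ k, f k = f 0 + ∑ k ∈ univ.erase 0, f k :=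
    fun f => (Finset.add_sum_erase _ f (mem_univ 0)).symm
  have hcard : ((univ.erase (0 : Fin p)).card : ℝ) = m := by
    rw [Finset.card_erase_of_mem (mem_univ _), Finset.card_univ, Fintype.card_fin,
      Nat.cast_sub (by omega : 1 ≤ p)]
    simp [hm_def]
  -- Hermitian
  have hH : (shiftedCov p c).IsHermitian := by
    show (shiftedCov p c)ᴴ = shiftedCov p c
    ext i j
    rw [Matrix.conjTranspose_apply, hSig, hSig]
    simp only [star_trivial]
    by_cases hij : i = j
    · subst hij; simp
    · have hji : ¬ j = i := fun h => hij h.symm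
      simp [hij, hji, or_comm]
  -- quadratic form
  have hQF : ∀ x : Fin p → ℝ, x ⬝ᵥ (shiftedCov p c *ᵥ x)
      = x 0 * x 0 + (∑ j ∈ univ.erase 0, x j * x j)
        + 2 * α * (x 0) * (∑ j ∈ univ.erase 0, x j) := by
    intro x
    have hinner0 : ∑ k, shiftedCov p c 0 k * x k
        = x 0 + α * ∑ j ∈ univ.erase 0, x j := by
      rw [hsplit (fun k => shiftedCov p c 0 k * x k)]
      have e1 : shiftedCov p c 0 0 * x 0 = x 0 := by rw [hSig]; simp
      have e2 : ∑ k ∈ univ.erase 0, shiftedCov p c 0 k * x k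
          = α * ∑ j ∈ univ.erase 0, x j := by
        rw [Finset.mul_sum]
        refine Finset.sum_congr rfl fun k hk => ?_
        have hk0 : k ≠ 0 := Finset.ne_of_mem_erase hk
        rw [hSig, if_neg (fun h => hk0 h.symm), if_pos (Or.inl rfl)]
      rw [e1, e2]
    have hinneri : ∀ i : Fin p, i ≠ 0 →
        ∑ k, shiftedCov p c i k * x k = α * x 0 + x i := by
      intro i hi
      rw [hsplit (fun k => shiftedCov p c i k * x k)]
      have h1 : shiftedCov p c i 0 * x 0 = α * x 0 := by
        rw [hSig, if_neg hi, if_pos (Or.inr rfl)]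
      have h2 : ∑ k ∈ univ.erase 0, shiftedCov p c i k * x k = x i := by
        have hcg : ∀ k ∈ univ.erase 0,
            shiftedCov p c i k * x k = if k = i then x k else 0 := by
          intro k hk
          have hk0 : k ≠ 0 := Finset.ne_of_mem_erase hk
          by_cases hki : k = i
          · rw [if_pos hki, hSig, if_pos hki.symm, one_mul]
          · rw [if_neg hki, hSig, if_neg (fun h => hki h.symm),
              if_neg (by push_neg; exact ⟨hi, hk0⟩), zero_mul]
        rw [Finset.sum_congr rfl hcg, Finset.sum_ite_eq' (univ.erase 0) i x,
          if_pos (Finset.mem_erase.mpr ⟨hi, mem_univ i⟩)]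
      rw [h1, h2]
    have hdot : x ⬝ᵥ (shiftedCov p c *ᵥ x)
        = ∑ i, x i * ∑ k, shiftedCov p c i k * x k := by
      simp [dotProduct, Matrix.mulVec]
    rw [hdot, hsplit (fun i => x i * ∑ k, shiftedCov p c i k * x k)]
    have h3 : ∑ i ∈ univ.erase 0, x i * ∑ k, shiftedCov p c i k * x k
        = ∑ i ∈ univ.erase 0, (α * x 0 * x i + x i * x i) := by
      refine Finset.sum_congr rfl fun i hi => ?_
      rw [hinneri i (Finset.ne_of_mem_erase hi)]
      ring
    rw [hinner0, h3, Finset.sum_add_distrib, ← Finset.mul_sum]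
    ring
  have hXX : ∀ x : Fin p → ℝ, x ⬝ᵥ x
      = x 0 * x 0 + ∑ j ∈ univ.erase 0, x j * x j := by
    intro x
    exact hsplit (fun k => x k * x k)
  have hCS : ∀ x : Fin p → ℝ,
      (∑ j ∈ univ.erase 0, x j) * (∑ j ∈ univ.erase 0, x j)
        ≤ m * ∑ j ∈ univ.erase 0, x j * x j := by
    intro x
    have := sq_sum_le_card_mul_sum_sq (s := univ.erase (0 : Fin p)) (f := x)
    calc (∑ j ∈ univ.erase 0, x j) * (∑ j ∈ univ.erase 0, x j)
        = (∑ j ∈ univ.erase 0, x j) ^ 2 := by ring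
      _ ≤ ((univ.erase (0 : Fin p)).card : ℝ) * ∑ j ∈ univ.erase 0, x j ^ 2 := this
      _ = m * ∑ j ∈ univ.erase 0, x j * x j := by
          rw [hcard]
          congr 1
          exact Finset.sum_congr rfl fun j _ => sq (x j) ▸ by ring
  have hQnn : ∀ x : Fin p → ℝ, 0 ≤ ∑ j ∈ univ.erase 0, x j * x j :=
    fun x => Finset.sum_nonneg fun j _ => mul_self_nonneg _
  -- eigenvalue bounds
  have hlow : ∀ x : Fin p → ℝ, (1 - c) * (x ⬝ᵥ x) ≤ x ⬝ᵥ (shiftedCov p c *ᵥ x) := by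
    intro x
    rw [hQF x, hXX x]
    set x0 := x 0
    set S := ∑ j ∈ univ.erase 0, x j
    set Q := ∑ j ∈ univ.erase 0, x j * x j
    have h1 : S * S ≤ m * Q := hCS x
    have h2 : 0 ≤ Q := hQnn x
    nlinarith [sq_nonneg (c * x0 + α * S), hααm, hc0, h2, h1,
      mul_le_mul_of_nonneg_left h1 (mul_self_nonneg α)]
  have hup : ∀ x : Fin p → ℝ, x ⬝ᵥ (shiftedCov p c *ᵥ x) ≤ (1 + c) * (x ⬝ᵥ x) := by
    intro x
    rw [hQF x, hXX x]
    set x0 := x 0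
    set S := ∑ j ∈ univ.erase 0, x j
    set Q := ∑ j ∈ univ.erase 0, x j * x j
    have h1 : S * S ≤ m * Q := hCS x
    have h2 : 0 ≤ Q := hQnn x
    nlinarith [sq_nonneg (c * x0 - α * S), hααm, hc0, h2, h1,
      mul_le_mul_of_nonneg_left h1 (mul_self_nonneg α)]
  -- eigenvector attainment
  have hw_plus : shiftedCov p c *ᵥ (fun j : Fin p => if j = 0 then s else 1)
      = (1 + c) • (fun j : Fin p => if j = 0 then s else 1) := by
    funext i
    have hLHS : (shiftedCov p c *ᵥ (fun j : Fin p => if j = 0 then s else 1)) i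
        = ∑ k, shiftedCov p c i k * (if k = 0 then s else 1) := by
      simp [Matrix.mulVec, dotProduct]
    rw [hLHS, hsplit (fun k => shiftedCov p c i k * (if k = 0 then s else 1))]
    by_cases hi : i = 0
    · subst hi
      have e1 : shiftedCov p c 0 0 * (if (0 : Fin p) = 0 then s else 1) = s := by
        rw [hSig]; simp
      have e2 : ∑ k ∈ univ.erase 0, shiftedCov p c 0 k * (if k = 0 then s else 1)
          = m * α := by
        rw [Finset.sum_congr rfl (fun k hk => ?_), Finset.sum_const, nsmul_eq_mul, hcard]
        have hk0 : k ≠ 0 := Finset.ne_of_mem_erase hk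
        rw [hSig, if_neg (fun h => hk0 h.symm), if_pos (Or.inl rfl), if_neg hk0, mul_one]
      rw [e1, e2]
      have : m * α = c * s := by rw [mul_comm]; exact hαm
      rw [this]
      simp only [Pi.smul_apply, if_pos rfl, smul_eq_mul, if_true]
      ring
    · have e1 : shiftedCov p c i 0 * (if (0 : Fin p) = 0 then s else 1) = c := by
        rw [hSig, if_neg hi, if_pos (Or.inr rfl), if_pos rfl, hα_def]
        exact div_mul_cancel₀ c hs0.ne'
      have e2 : ∑ k ∈ univ.erase 0, shiftedCov p c i k * (if k = 0 then s else 1)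
          = 1 := by
        rw [Finset.sum_congr rfl (fun k hk => ?_)]
        · rw [Finset.sum_ite_eq' (univ.erase 0) i (fun _ => (1:ℝ)),
            if_pos (Finset.mem_erase.mpr ⟨hi, mem_univ i⟩)]
        · have hk0 : k ≠ 0 := Finset.ne_of_mem_erase hk
          rw [if_neg hk0, mul_one, hSig]
          by_cases hki : k = i
          · rw [if_pos hki.symm, if_pos hki]
          · rw [if_neg (fun h => hki h.symm), if_neg (by push_neg; exact ⟨hi, hk0⟩),
              if_neg hki]
      rw [e1, e2]
      simp only [Pi.smul_apply, if_neg hi, smul_eq_mul]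
      ring
  have hw_minus : shiftedCov p c *ᵥ (fun j : Fin p => if j = 0 then -s else 1)
      = (1 - c) • (fun j : Fin p => if j = 0 then -s else 1) := by
    funext i
    have hLHS : (shiftedCov p c *ᵥ (fun j : Fin p => if j = 0 then -s else 1)) i
        = ∑ k, shiftedCov p c i k * (if k = 0 then -s else 1) := by
      simp [Matrix.mulVec, dotProduct]
    rw [hLHS, hsplit (fun k => shiftedCov p c i k * (if k = 0 then -s else 1))]
    by_cases hi : i = 0
    · subst hi
      have e1 : shiftedCov p c 0 0 * (if (0 : Fin p) = 0 then -s else 1) = -s := by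
        rw [hSig]; simp
      have e2 : ∑ k ∈ univ.erase 0, shiftedCov p c 0 k * (if k = 0 then -s else 1)
          = m * α := by
        rw [Finset.sum_congr rfl (fun k hk => ?_), Finset.sum_const, nsmul_eq_mul, hcard]
        have hk0 : k ≠ 0 := Finset.ne_of_mem_erase hk
        rw [hSig, if_neg (fun h => hk0 h.symm), if_pos (Or.inl rfl), if_neg hk0, mul_one]
      rw [e1, e2]
      have : m * α = c * s := by rw [mul_comm]; exact hαm
      rw [this]
      simp only [Pi.smul_apply, if_pos rfl, smul_eq_mul, if_true]
      ring
    · have e1 : shiftedCov p c i 0 * (if (0 : Fin p) = 0 then -s else 1) = -c := by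
        rw [hSig, if_neg hi, if_pos (Or.inr rfl), if_pos rfl]
        rw [hα_def]
        field_simp
      have e2 : ∑ k ∈ univ.erase 0, shiftedCov p c i k * (if k = 0 then -s else 1)
          = 1 := by
        rw [Finset.sum_congr rfl (fun k hk => ?_)]
        · rw [Finset.sum_ite_eq' (univ.erase 0) i (fun _ => (1:ℝ)),
            if_pos (Finset.mem_erase.mpr ⟨hi, mem_univ i⟩)]
        · have hk0 : k ≠ 0 := Finset.ne_of_mem_erase hk
          rw [if_neg hk0, mul_one, hSig]
          by_cases hki : k = i
          · rw [if_pos hki.symm, if_pos hki]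
          · rw [if_neg (fun h => hki h.symm), if_neg (by push_neg; exact ⟨hi, hk0⟩),
              if_neg hki]
      rw [e1, e2]
      simp only [Pi.smul_apply, if_neg hi, smul_eq_mul]
      ring
  have hwp_ne : (fun j : Fin p => if j = 0 then s else 1) ≠ 0 := by
    intro h
    have := congrFun h 0
    simp at this
    exact hs0.ne' this
  have hwm_ne : (fun j : Fin p => if j = 0 then -s else 1) ≠ 0 := by
    intro h
    have := congrFun h 0
    simp at this
    exact hs0.ne' this
  -- explicit inverse
  set B : Matrix (Fin p) (Fin p) ℝ := Matrix.of (fun i j =>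
    if i = 0 then (if j = 0 then 1/d else -α/d)
    else (if j = 0 then -α/d else if i = j then 1 + α*α/d else α*α/d)) with hB_def
  have hB00 : B 0 0 = 1/d := by simp [hB_def]
  have hB0l : ∀ l : Fin p, l ≠ 0 → B 0 l = -α/d := by
    intro l hl; simp [hB_def, hl]
  have hBk0 : ∀ k : Fin p, k ≠ 0 → B k 0 = -α/d := by
    intro k hk; simp [hB_def, hk]
  have hBkl : ∀ k l : Fin p, k ≠ 0 → l ≠ 0 →
      B k l = if k = l then 1 + α*α/d else α*α/d := by
    intro k l hk hl; simp [hB_def, hk, hl]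
  have hdne : (1 : ℝ) - c * c ≠ 0 := by rw [← hd_def]; exact hd0.ne'
  have hsumB0 : ∑ k ∈ univ.erase 0, B k 0 = m * (-α/d) := by
    rw [Finset.sum_congr rfl (fun k hk => hBk0 k (Finset.ne_of_mem_erase hk)),
      Finset.sum_const, nsmul_eq_mul, hcard]
  have hsumBl : ∀ l : Fin p, l ≠ 0 →
      ∑ k ∈ univ.erase 0, B k l = 1 + m * (α*α/d) := by
    intro l hl
    have hcg : ∀ k ∈ univ.erase 0, B k l = α*α/d + (if k = l then 1 else 0) := by
      intro k hk
      rw [hBkl k l (Finset.ne_of_mem_erase hk) hl]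
      by_cases hkl : k = l
      · rw [if_pos hkl, if_pos hkl]; ring
      · rw [if_neg hkl, if_neg hkl]; ring
    rw [Finset.sum_congr rfl hcg, Finset.sum_add_distrib, Finset.sum_const, nsmul_eq_mul,
      hcard, Finset.sum_ite_eq' (univ.erase 0) l (fun _ => (1:ℝ)),
      if_pos (Finset.mem_erase.mpr ⟨hl, mem_univ l⟩)]
    ring
  have hmulB : shiftedCov p c * B = 1 := by
    ext i l
    rw [Matrix.mul_apply, Matrix.one_apply,
      hsplit (fun k => shiftedCov p c i k * B k l)]
    by_cases hi : i = 0
    · subst hi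
      have e0 : shiftedCov p c 0 0 = 1 := by rw [hSig]; simp
      have eE : ∑ k ∈ univ.erase 0, shiftedCov p c 0 k * B k l
          = α * ∑ k ∈ univ.erase 0, B k l := by
        rw [Finset.mul_sum]
        refine Finset.sum_congr rfl fun k hk => ?_
        have hk0 : k ≠ 0 := Finset.ne_of_mem_erase hk
        rw [hSig, if_neg (fun h => hk0 h.symm), if_pos (Or.inl rfl)]
      rw [e0, one_mul, eE]
      by_cases hl : l = 0
      · subst hl
        rw [hB00, hsumB0, if_pos rfl]
        rw [show α * (m * (-α/d)) = -((α*α*m)/d) from by ring, hααm]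
        rw [hd_def] at hd0 ⊢
        have hx : (1:ℝ) - c^2 ≠ 0 := by nlinarith
        field_simp
        ring
      · rw [hB0l l hl, hsumBl l hl, if_neg (fun h => hl h.symm)]
        rw [show α * (1 + m * (α*α/d)) = α + (α*α*m) * α / d from by ring, hααm]
        rw [hd_def]
        have hx : (1:ℝ) - c^2 ≠ 0 := by nlinarith
        field_simp
        ring
    · have e0 : shiftedCov p c i 0 * B 0 l = α * B 0 l := by
        rw [hSig, if_neg hi, if_pos (Or.inr rfl)]
      have eE : ∑ k ∈ univ.erase 0, shiftedCov p c i k * B k l = B i l := by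
        have hcg : ∀ k ∈ univ.erase 0,
            shiftedCov p c i k * B k l = if k = i then B k l else 0 := by
          intro k hk
          have hk0 : k ≠ 0 := Finset.ne_of_mem_erase hk
          by_cases hki : k = i
          · rw [if_pos hki, hSig, if_pos hki.symm, one_mul]
          · rw [if_neg hki, hSig, if_neg (fun h => hki h.symm),
              if_neg (by push_neg; exact ⟨hi, hk0⟩), zero_mul]
        rw [Finset.sum_congr rfl hcg,
          Finset.sum_ite_eq' (univ.erase 0) i (fun k => B k l),
          if_pos (Finset.mem_erase.mpr ⟨hi, mem_univ i⟩)]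
      rw [e0, eE]
      by_cases hl : l = 0
      · subst hl
        rw [hB00, hBk0 i hi, if_neg hi]
        ring
      · rw [hB0l l hl, hBkl i l hi hl, if_congr (Iff.rfl) rfl rfl]
        by_cases hil : i = l
        · rw [if_pos hil, if_pos hil]
          ring
        · rw [if_neg hil, if_neg hil]
          ring
  have hInv : (shiftedCov p c)⁻¹ = B := Matrix.inv_eq_right_inv hmulB
  -- entries of (Σ - 1) * B
  have hD : ∀ i k : Fin p, (shiftedCov p c - 1) i k
      = if i = k then 0 else if i = 0 ∨ k = 0 then α else 0 := by
    intro i k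
    rw [Matrix.sub_apply, hSig, Matrix.one_apply]
    by_cases h : i = k
    · simp [h]
    · simp [h]
  have hM0 : ∀ l : Fin p, ((shiftedCov p c - 1) * B) 0 l
      = if l = 0 then -(c*c)/d else α/d := by
    intro l
    rw [Matrix.mul_apply, hsplit (fun k => (shiftedCov p c - 1) 0 k * B k l)]
    have e0 : (shiftedCov p c - 1) 0 0 * B 0 l = 0 := by
      rw [hD, if_pos rfl, zero_mul]
    have eE : ∑ k ∈ univ.erase 0, (shiftedCov p c - 1) 0 k * B k l
        = α * ∑ k ∈ univ.erase 0, B k l := by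
      rw [Finset.mul_sum]
      refine Finset.sum_congr rfl fun k hk => ?_
      have hk0 : k ≠ 0 := Finset.ne_of_mem_erase hk
      rw [hD, if_neg (fun h => hk0 h.symm), if_pos (Or.inl rfl)]
    rw [e0, zero_add, eE]
    by_cases hl : l = 0
    · subst hl
      rw [hsumB0, if_pos rfl,
        show α * (m * (-α/d)) = -((α*α*m)/d) from by ring, hααm]
      ring
    · rw [hsumBl l hl, if_neg hl,
        show α * (1 + m * (α*α/d)) = α + (α*α*m) * α / d from by ring, hααm]
      rw [hd_def]
      have hx : (1:ℝ) - c^2 ≠ 0 := by nlinarith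
      field_simp
      ring
  have hMi : ∀ i : Fin p, i ≠ 0 → ∀ l : Fin p, ((shiftedCov p c - 1) * B) i l
      = if l = 0 then α/d else -(α*α)/d := by
    intro i hi l
    rw [Matrix.mul_apply, hsplit (fun k => (shiftedCov p c - 1) i k * B k l)]
    have e0 : (shiftedCov p c - 1) i 0 * B 0 l = α * B 0 l := by
      rw [hD, if_neg hi, if_pos (Or.inr rfl)]
    have eE : ∑ k ∈ univ.erase 0, (shiftedCov p c - 1) i k * B k l = 0 := by
      refine Finset.sum_eq_zero fun k hk => ?_
      have hk0 : k ≠ 0 := Finset.ne_of_mem_erase hk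
      rw [hD]
      by_cases hki : i = k
      · rw [if_pos hki, zero_mul]
      · rw [if_neg hki, if_neg (by push_neg; exact ⟨hi, hk0⟩), zero_mul]
    rw [e0, eE, add_zero]
    by_cases hl : l = 0
    · subst hl
      rw [hB00, if_pos rfl]
      ring
    · rw [hB0l l hl, if_neg hl]
      ring
  -- row sums
  have hf0 : ∑ l, |((shiftedCov p c - 1) * B) 0 l| = (c*c + c*s)/d := by
    rw [hsplit (fun l => |((shiftedCov p c - 1) * B) 0 l|)]
    have e0 : |((shiftedCov p c - 1) * B) 0 0| = (c*c)/d := by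
      rw [hM0 0, if_pos rfl, neg_div, abs_neg, abs_of_nonneg (by positivity)]
    have eE : ∑ l ∈ univ.erase 0, |((shiftedCov p c - 1) * B) 0 l| = m * (α/d) := by
      rw [Finset.sum_congr rfl (fun l hl => ?_), Finset.sum_const, nsmul_eq_mul, hcard]
      rw [hM0 l, if_neg (Finset.ne_of_mem_erase hl),
        abs_of_pos (div_pos hα0 hd0)]
    rw [e0, eE, show m * (α/d) = (α*m)/d from by ring, hαm, ← add_div]
  have hfi : ∀ j : Fin p, j ≠ 0 →
      ∑ l, |((shiftedCov p c - 1) * B) j l| = (α + c*c)/d := by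
    intro j hj
    rw [hsplit (fun l => |((shiftedCov p c - 1) * B) j l|)]
    have e0 : |((shiftedCov p c - 1) * B) j 0| = α/d := by
      rw [hMi j hj 0, if_pos rfl, abs_of_pos (div_pos hα0 hd0)]
    have eE : ∑ l ∈ univ.erase 0, |((shiftedCov p c - 1) * B) j l|
        = m * ((α*α)/d) := by
      rw [Finset.sum_congr rfl (fun l hl => ?_), Finset.sum_const, nsmul_eq_mul, hcard]
      rw [hMi j hj l, if_neg (Finset.ne_of_mem_erase hl), neg_div, abs_neg,
        abs_of_nonneg (by positivity)]
    rw [e0, eE, show m * ((α*α)/d) = (α*α*m)/d from by ring, hααm, ← add_div]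
  have hub : ∀ j : Fin p, ∑ l, |((shiftedCov p c - 1) * B) j l| ≤ (c*c + c*s)/d := by
    intro j
    by_cases hj : j = 0
    · subst hj; exact le_of_eq hf0
    · rw [hfi j hj]
      have h6 : c * 1 ≤ c * s := mul_le_mul_of_nonneg_left hs1 hc0.le
      exact (div_le_div_iff_of_pos_right hd0).mpr (by linarith [hαc])
  -- the factor formula
  have hfactor : covShiftFactor p c = 1 + (c*c + c*s)/d := by
    unfold covShiftFactor
    rw [hInv]
    congr 1
    apply le_antisymm
    · exact ciSup_le hub
    · rw [← hf0]
      exact le_ciSup (Set.Finite.bddAbove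
        (Set.finite_range (fun j : Fin p => ∑ l, |((shiftedCov p c - 1) * B) j l|))) 0
  refine ⟨hH, ?_, ?_, ?_, ?_⟩
  · intro i
    exact ⟨eig_lb hH hlow i, eig_ub hH hup i⟩
  · exact eig_attained hH hwm_ne hw_minus
  · exact eig_attained hH hwp_ne hw_plus
  · exact hfactor

/-- Appendix C: for `Σ¹ = αA + (1 − α)I` with `α = c/√(p−1)` and
`Σ⁰ = I`, the eigenvalues of `Σ¹` lie in `[1 − c, 1 + c]` with both endpoints attained,
and the covariate-shift factor `C_Σ` is of exact order `√p`; in particular it diverges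
with `p`. -/
theorem covariate_shift_factor_diverges (c : ℝ) (hc0 : 0 < c) (hc1 : c < 1) :
    ∃ a1 a2 : ℝ, 0 < a1 ∧ 0 < a2 ∧
      ∀ p : ℕ, 2 ≤ p →
        ∃ hS : (shiftedCov p c).IsHermitian,
          (∀ i, 1 - c ≤ hS.eigenvalues i ∧ hS.eigenvalues i ≤ 1 + c) ∧
          (∃ i, hS.eigenvalues i = 1 - c) ∧
          (∃ i, hS.eigenvalues i = 1 + c) ∧
          a1 * Real.sqrt p ≤ covShiftFactor p c ∧
          covShiftFactor p c ≤ a2 * Real.sqrt p := by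
  have hd0 : (0:ℝ) < 1 - c * c := by nlinarith
  have ha2 : 0 < 1 + (c + c*c)/(1 - c*c) := by
    have : 0 < (c + c*c)/(1 - c*c) := div_pos (by nlinarith) hd0
    linarith
  refine ⟨c/2, 1 + (c + c*c)/(1 - c*c), by positivity, ha2, ?_⟩
  intro p hp
  obtain ⟨hS, h1, h2, h3, h4⟩ := main_aux c hc0 hc1 p hp
  set s := Real.sqrt ((p:ℝ) - 1) with hs_def
  have hp2 : (2:ℝ) ≤ (p:ℝ) := by exact_mod_cast hp
  have hm0 : (0:ℝ) < (p:ℝ) - 1 := by linarith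
  have hs0 : 0 < s := Real.sqrt_pos.mpr hm0
  have hs1 : 1 ≤ s := by
    have := Real.sqrt_le_sqrt (by linarith : (1:ℝ) ≤ (p:ℝ) - 1)
    simpa [hs_def] using this
  have hsp : s ≤ Real.sqrt p := Real.sqrt_le_sqrt (by linarith)
  have h1p : 1 ≤ Real.sqrt p := le_trans hs1 hsp
  have h2s : Real.sqrt p ≤ 2 * s := by
    have h41 : ((p:ℝ)) ≤ 4 * ((p:ℝ) - 1) := by linarith
    calc Real.sqrt p ≤ Real.sqrt (4 * ((p:ℝ) - 1)) := Real.sqrt_le_sqrt h41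
      _ = 2 * s := by
          rw [show (4:ℝ) * ((p:ℝ) - 1) = (2:ℝ)^2 * ((p:ℝ) - 1) from by norm_num,
            Real.sqrt_mul (by positivity), Real.sqrt_sq (by norm_num : (0:ℝ) ≤ 2)]
  refine ⟨hS, h1, h2, h3, ?_, ?_⟩
  · rw [h4]
    have hT : c * s ≤ (c*c + c*s)/(1 - c*c) := by
      rw [le_div_iff₀ hd0]
      nlinarith [mul_pos hc0 hs0]
    have h5 : c/2 * Real.sqrt p ≤ c * s := by nlinarith [h2s, hc0]
    linarith
  · rw [h4]
    have h7 : c*c + c*s ≤ (c + c*c) * Real.sqrt p := by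
      nlinarith [hsp, h1p, hc0.le, mul_le_mul_of_nonneg_left hsp hc0.le]
    have h8 : (c*c + c*s)/(1 - c*c) ≤ ((c + c*c) * Real.sqrt p)/(1 - c*c) :=
      (div_le_div_iff_of_pos_right hd0).mpr h7
    have h9 : ((c + c*c) * Real.sqrt p)/(1 - c*c)
        = (c + c*c)/(1 - c*c) * Real.sqrt p := by ring
    have h10 : (1 + (c + c*c)/(1 - c*c)) * Real.sqrt p
        = Real.sqrt p + (c + c*c)/(1 - c*c) * Real.sqrt p := by ring
    rw [h10]
    rw [h9] at h8
    linarith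

end
end
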